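/- Let f : Y → X be a coarse map between coarse spaces with X unital (the diagonal 1_X is an entourage of X), and suppose: (monic condition) 𝓔_Y = 𝓔_{Terminate(Y)} ∩ f*𝓔_X; and (epi condition) every point x ∈ X is connected to f(y) for some y ∈ Y (i.e., {(x, f(y))} ∈ 𝓔_X), and the ideal of 𝓔_X generated by {(f × f)(F) : F ∈ 𝓔_Y} equals 𝓔_X. Then there exists a coarse map e : X → Y such that f ∘ e is close to the identity of X and e ∘ f is close to the identity of Y; i.e., f is a coarse equivalence. -/
import Mathlib


open Set

universe u v w

/-- `E ⊆ X × X` satisfies the properness axiom: for every finite `K ⊆ X`,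
the sets `{e ∈ E | e.1 ∈ K}` and `{e ∈ E | e.2 ∈ K}` are finite. -/
def ProperAx {X : Type u} (E : Set (X × X)) : Prop :=
  ∀ K : Set X, K.Finite → {e ∈ E | e.1 ∈ K}.Finite ∧ {e ∈ E | e.2 ∈ K}.Finite

/-- Composition of relations: `E ∘ E' = {(x, x'') : ∃ x', (x, x') ∈ E ∧ (x', x'') ∈ E'}`. -/
def rcomp {X : Type u} (E E' : Set (X × X)) : Set (X × X) :=
  {p | ∃ x', (p.1, x') ∈ E ∧ (x', p.2) ∈ E'}

/-- Transpose of a relation. -/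
def rtrans {X : Type u} (E : Set (X × X)) : Set (X × X) :=
  {p | (p.2, p.1) ∈ E}

/-- Local unit over `S`: the diagonal `{(x, x) : x ∈ S}`. -/
def runit {X : Type u} (S : Set X) : Set (X × X) :=
  {p | p.1 ∈ S ∧ p.1 = p.2}

/-- A set map is proper if the preimage of every finite subset is finite. -/
def ProperMap {Y : Type u} {X : Type v} (f : Y → X) : Prop :=
  ∀ K : Set X, K.Finite → (f ⁻¹' K).Finite

/-- `f` is locally proper for `F ⊆ Y × Y`: `(f × f)(F)` satisfies the properness
axiom and the restriction of `f × f` to `F` is a proper map into `X × X`. -/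
def LocProperFor {Y : Type u} {X : Type v} (f : Y → X) (F : Set (Y × Y)) : Prop :=
  ProperAx (Prod.map f f '' F) ∧
  ∀ K : Set (X × X), K.Finite → {p ∈ F | Prod.map f f p ∈ K}.Finite

/-- A coarse structure on `X`. -/
structure CoarseStructure (X : Type u) where
  ents : Set (Set (X × X))
  proper : ∀ E ∈ ents, ProperAx E
  union_mem : ∀ E ∈ ents, ∀ E' ∈ ents, E ∪ E' ∈ ents
  comp_mem : ∀ E ∈ ents, ∀ E' ∈ ents, rcomp E E' ∈ ents
  trans_mem : ∀ E ∈ ents, rtrans E ∈ ents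
  subset_mem : ∀ E ∈ ents, ∀ E' ⊆ E, E' ∈ ents
  singleton_mem : ∀ x : X, ({(x, x)} : Set (X × X)) ∈ ents

/-- A coarse map: locally proper for every entourage of the domain, and
preserves entourages. -/
def IsCoarseMap {Y : Type u} {X : Type v} (CY : CoarseStructure Y) (CX : CoarseStructure X)
    (f : Y → X) : Prop :=
  ∀ F ∈ CY.ents, LocProperFor f F ∧ Prod.map f f '' F ∈ CX.ents

/-- `(f × f')(F) = {(f y, f' y') : (y, y') ∈ F}`. -/
def prodImage {Y : Type u} {X : Type v} (f f' : Y → X) (F : Set (Y × Y)) : Set (X × X) :=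
  (fun p => (f p.1, f' p.2)) '' F

/-- Coarse maps `f, f'` are close if `(f × f')(F)` is an entourage of the codomain
for every entourage `F` of the domain. -/
def Close {Y : Type u} {X : Type v} (CY : CoarseStructure Y) (CX : CoarseStructure X)
    (f f' : Y → X) : Prop :=
  ∀ F ∈ CY.ents, prodImage f f' F ∈ CX.ents

/-- Left support `F·Y`. -/
def leftSupp {Y : Type u} (F : Set (Y × Y)) : Set Y := Prod.fst '' F

/-- Right support `Y·F`. -/
def rightSupp {Y : Type u} (F : Set (Y × Y)) : Set Y := Prod.snd '' F

/-- Left `F`-neighbourhood `F·S`. -/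
def leftNbhd {Y : Type u} (F : Set (Y × Y)) (S : Set Y) : Set Y := {y | ∃ y' ∈ S, (y, y') ∈ F}

/-- Right `F`-neighbourhood `S·F`. -/
def rightNbhd {Y : Type u} (S : Set Y) (F : Set (Y × Y)) : Set Y := {y' | ∃ y ∈ S, (y, y') ∈ F}

/-- The coarse structure of `Terminate(Y)`. -/
def TerminateEnts {Y : Type u} (CY : CoarseStructure Y) : Set (Set (Y × Y)) :=
  {F | ProperAx F ∧ runit (leftSupp F) ∈ CY.ents ∧ runit (rightSupp F) ∈ CY.ents}

/-- The pull-back coarse structure along `f`. -/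
def pullbackEnts {Y : Type u} {X : Type v} (f : Y → X) (CX : CoarseStructure X) :
    Set (Set (Y × Y)) :=
  {F | ProperAx F ∧ LocProperFor f F ∧ Prod.map f f '' F ∈ CX.ents}

/-- A collection of subsets of `X × X` is a coarse structure. -/
def IsCoarseStructureSet {X : Type u} (E : Set (Set (X × X))) : Prop :=
  (∀ F ∈ E, ProperAx F) ∧ (∀ F ∈ E, ∀ F' ∈ E, F ∪ F' ∈ E) ∧
  (∀ F ∈ E, ∀ F' ∈ E, rcomp F F' ∈ E) ∧ (∀ F ∈ E, rtrans F ∈ E) ∧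
  (∀ F ∈ E, ∀ F' ⊆ F, F' ∈ E) ∧ (∀ x : X, ({(x, x)} : Set (X × X)) ∈ E)

/-- An ideal of a coarse structure. -/
def IsIdeal {X : Type u} (CX : CoarseStructure X) (I : Set (Set (X × X))) : Prop :=
  I ⊆ CX.ents ∧ IsCoarseStructureSet I ∧
  ∀ F ∈ I, ∀ F' ∈ CX.ents, rcomp F F' ∈ I ∧ rcomp F' F ∈ I

/-- The smallest ideal of `CX` containing `S`. -/
def idealGen {X : Type u} (CX : CoarseStructure X) (S : Set (Set (X × X))) :
    Set (Set (X × X)) :=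
  ⋂₀ {I | IsIdeal CX I ∧ S ⊆ I}

lemma properAx_mono {X : Type u} {E E' : Set (X × X)} (hs : E' ⊆ E) (h : ProperAx E) :
    ProperAx E' := by
  intro K hK
  obtain ⟨h1, h2⟩ := h K hK
  exact ⟨h1.subset fun p hp => ⟨hs hp.1, hp.2⟩, h2.subset fun p hp => ⟨hs hp.1, hp.2⟩⟩

/-- A coarse map to a unital coarse space which is both monic and epi in the coarse
category is a coarse equivalence. -/
theorem stmt19 {Y : Type u} {X : Type v} (CY : CoarseStructure Y) (CX : CoarseStructure X)
    (f : Y → X) (hf : IsCoarseMap CY CX f)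
    (hXuni : runit (Set.univ : Set X) ∈ CX.ents)
    (hmonic : CY.ents = TerminateEnts CY ∩ pullbackEnts f CX)
    (hepi1 : ∀ x : X, ∃ y : Y, ({(x, f y)} : Set (X × X)) ∈ CX.ents)
    (hepi2 : idealGen CX {E | ∃ F ∈ CY.ents, E = Prod.map f f '' F} = CX.ents) :
    ∃ e : X → Y, IsCoarseMap CX CY e ∧
      Close CX CX (f ∘ e) id ∧ Close CY CY (e ∘ f) id := by
  classical
  -- unpack the monic hypothesis
  have hmem : ∀ F ∈ CY.ents, ProperAx F ∧ runit (leftSupp F) ∈ CY.ents ∧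
      runit (rightSupp F) ∈ CY.ents ∧ LocProperFor f F ∧ Prod.map f f '' F ∈ CX.ents := by
    intro F hF
    rw [hmonic] at hF
    exact ⟨hF.1.1, hF.1.2.1, hF.1.2.2, hF.2.2.1, hF.2.2.2⟩
  have hmem' : ∀ F : Set (Y × Y), ProperAx F → runit (leftSupp F) ∈ CY.ents →
      runit (rightSupp F) ∈ CY.ents → LocProperFor f F → Prod.map f f '' F ∈ CX.ents →
      F ∈ CY.ents := by
    intro F h1 h2 h3 h4 h5
    rw [hmonic]
    exact ⟨⟨h1, h2, h3⟩, h1, h4, h5⟩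
  have hunital_mono : ∀ A B : Set Y, A ⊆ B → runit B ∈ CY.ents → runit A ∈ CY.ents := by
    intro A B hAB hB
    exact CY.subset_mem _ hB _ (fun p hp => ⟨hAB hp.1, hp.2⟩)
  have hUnion : ∀ V V' : Set Y, runit V ∈ CY.ents → runit V' ∈ CY.ents →
      runit (V ∪ V') ∈ CY.ents := by
    intro V V' h h'
    have heq : runit (V ∪ V') = runit V ∪ runit V' := by
      ext p
      simp only [runit, Set.mem_setOf_eq, Set.mem_union]
      tauto
    rw [heq]
    exact CY.union_mem _ h _ h'
  -- the auxiliary ideal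
  set I : Set (Set (X × X)) := {E | E ∈ CX.ents ∧ ∃ E₀ ∈ CX.ents, ∃ V : Set Y,
      runit V ∈ CY.ents ∧ ∀ x ∈ leftSupp E ∪ rightSupp E, ∃ y ∈ V, (x, f y) ∈ E₀} with hIdef
  have hIideal : IsIdeal CX I := by
    refine ⟨fun E hE => hE.1, ⟨?_, ?_, ?_, ?_, ?_, ?_⟩, ?_⟩
    · exact fun E hE => CX.proper E hE.1
    · rintro E ⟨hE, E₁, hE₁, V₁, hV₁, h₁⟩ E' ⟨hE', E₂, hE₂, V₂, hV₂, h₂⟩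
      refine ⟨CX.union_mem E hE E' hE', E₁ ∪ E₂, CX.union_mem _ hE₁ _ hE₂, V₁ ∪ V₂,
        hUnion _ _ hV₁ hV₂, ?_⟩
      rintro x (⟨p, hp | hp, rfl⟩ | ⟨p, hp | hp, rfl⟩)
      · obtain ⟨y, hy, hxy⟩ := h₁ p.1 (Or.inl ⟨p, hp, rfl⟩)
        exact ⟨y, Or.inl hy, Or.inl hxy⟩
      · obtain ⟨y, hy, hxy⟩ := h₂ p.1 (Or.inl ⟨p, hp, rfl⟩)
        exact ⟨y, Or.inr hy, Or.inr hxy⟩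
      · obtain ⟨y, hy, hxy⟩ := h₁ p.2 (Or.inr ⟨p, hp, rfl⟩)
        exact ⟨y, Or.inl hy, Or.inl hxy⟩
      · obtain ⟨y, hy, hxy⟩ := h₂ p.2 (Or.inr ⟨p, hp, rfl⟩)
        exact ⟨y, Or.inr hy, Or.inr hxy⟩
    · rintro E ⟨hE, E₁, hE₁, V₁, hV₁, h₁⟩ E' ⟨hE', E₂, hE₂, V₂, hV₂, h₂⟩
      refine ⟨CX.comp_mem E hE E' hE', E₁ ∪ E₂, CX.union_mem _ hE₁ _ hE₂, V₁ ∪ V₂,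
        hUnion _ _ hV₁ hV₂, ?_⟩
      rintro x (⟨p, ⟨m, hm1, hm2⟩, rfl⟩ | ⟨p, ⟨m, hm1, hm2⟩, rfl⟩)
      · obtain ⟨y, hy, hxy⟩ := h₁ p.1 (Or.inl ⟨(p.1, m), hm1, rfl⟩)
        exact ⟨y, Or.inl hy, Or.inl hxy⟩
      · obtain ⟨y, hy, hxy⟩ := h₂ p.2 (Or.inr ⟨(m, p.2), hm2, rfl⟩)
        exact ⟨y, Or.inr hy, Or.inr hxy⟩
    · rintro E ⟨hE, E₁, hE₁, V₁, hV₁, h₁⟩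
      refine ⟨CX.trans_mem E hE, E₁, hE₁, V₁, hV₁, ?_⟩
      rintro x (⟨p, hp, rfl⟩ | ⟨p, hp, rfl⟩)
      · exact h₁ p.1 (Or.inr ⟨(p.2, p.1), hp, rfl⟩)
      · exact h₁ p.2 (Or.inl ⟨(p.2, p.1), hp, rfl⟩)
    · rintro E ⟨hE, E₁, hE₁, V₁, hV₁, h₁⟩ E' hsub
      refine ⟨CX.subset_mem E hE E' hsub, E₁, hE₁, V₁, hV₁, ?_⟩
      rintro x (⟨p, hp, rfl⟩ | ⟨p, hp, rfl⟩)
      · exact h₁ p.1 (Or.inl ⟨p, hsub hp, rfl⟩)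
      · exact h₁ p.2 (Or.inr ⟨p, hsub hp, rfl⟩)
    · intro x
      obtain ⟨y, hy⟩ := hepi1 x
      have hry : runit ({y} : Set Y) ∈ CY.ents := by
        refine CY.subset_mem _ (CY.singleton_mem y) _ ?_
        rintro ⟨a, b⟩ ⟨ha, hab⟩
        simp only [Set.mem_singleton_iff] at ha
        subst ha
        cases hab
        rfl
      refine ⟨CX.singleton_mem x, {(x, f y)}, hy, {y}, hry, ?_⟩
      rintro z (⟨p, rfl, rfl⟩ | ⟨p, rfl, rfl⟩) <;> exact ⟨y, rfl, rfl⟩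
    · rintro E ⟨hE, E₁, hE₁, V₁, hV₁, h₁⟩ E' hE'
      constructor
      · refine ⟨CX.comp_mem E hE E' hE', E₁ ∪ rcomp (rtrans E') E₁,
          CX.union_mem _ hE₁ _ (CX.comp_mem _ (CX.trans_mem E' hE') _ hE₁), V₁, hV₁, ?_⟩
        rintro x (⟨p, ⟨m, hm1, hm2⟩, rfl⟩ | ⟨p, ⟨m, hm1, hm2⟩, rfl⟩)
        · obtain ⟨y, hy, hxy⟩ := h₁ p.1 (Or.inl ⟨(p.1, m), hm1, rfl⟩)
          exact ⟨y, hy, Or.inl hxy⟩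
        · obtain ⟨y, hy, hxy⟩ := h₁ m (Or.inr ⟨(p.1, m), hm1, rfl⟩)
          exact ⟨y, hy, Or.inr ⟨m, hm2, hxy⟩⟩
      · refine ⟨CX.comp_mem E' hE' E hE, E₁ ∪ rcomp E' E₁,
          CX.union_mem _ hE₁ _ (CX.comp_mem _ hE' _ hE₁), V₁, hV₁, ?_⟩
        rintro x (⟨p, ⟨m, hm1, hm2⟩, rfl⟩ | ⟨p, ⟨m, hm1, hm2⟩, rfl⟩)
        · obtain ⟨y, hy, hxy⟩ := h₁ m (Or.inl ⟨(m, p.2), hm2, rfl⟩)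
          exact ⟨y, hy, Or.inr ⟨m, hm1, hxy⟩⟩
        · obtain ⟨y, hy, hxy⟩ := h₁ p.2 (Or.inr ⟨(m, p.2), hm2, rfl⟩)
          exact ⟨y, hy, Or.inl hxy⟩
  have hSI : {E | ∃ F ∈ CY.ents, E = Prod.map f f '' F} ⊆ I := by
    rintro E ⟨F, hF, rfl⟩
    obtain ⟨hFP, hFl, hFr, hFloc, hFimg⟩ := hmem F hF
    refine ⟨hFimg, runit Set.univ, hXuni, leftSupp F ∪ rightSupp F, hUnion _ _ hFl hFr, ?_⟩
    rintro x (⟨q, ⟨p, hp, rfl⟩, rfl⟩ | ⟨q, ⟨p, hp, rfl⟩, rfl⟩)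
    · exact ⟨p.1, Or.inl ⟨p, hp, rfl⟩, trivial, rfl⟩
    · exact ⟨p.2, Or.inr ⟨p, hp, rfl⟩, trivial, rfl⟩
  have hXI : CX.ents ⊆ I := by
    rw [← hepi2]
    exact Set.sInter_subset_of_mem ⟨hIideal, hSI⟩
  obtain ⟨-, E₀, hE₀, V, hV, hVx⟩ := hXI hXuni
  have hall : ∀ x : X, ∃ y ∈ V, (x, f y) ∈ E₀ := by
    intro x
    exact hVx x (Or.inl ⟨(x, x), ⟨trivial, rfl⟩, rfl⟩)
  choose e heV heE₀ using hall
  -- properness facts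
  have hfe : ∀ L : Set X, L.Finite → {x : X | f (e x) ∈ L}.Finite := by
    intro L hL
    have h1 : {p ∈ E₀ | p.2 ∈ L}.Finite := (CX.proper E₀ hE₀ L hL).2
    refine (h1.image Prod.fst).subset ?_
    intro x hx
    exact ⟨(x, f (e x)), ⟨heE₀ x, hx⟩, rfl⟩
  have he : ∀ K : Set Y, K.Finite → {x : X | e x ∈ K}.Finite := by
    intro K hK
    exact (hfe (f '' K) (hK.image f)).subset fun x hx => Set.mem_image_of_mem f hx
  have hFfst : ∀ F ∈ CY.ents, ∀ L : Set X, L.Finite → {p ∈ F | f p.1 ∈ L}.Finite := by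
    intro F hF L hL
    obtain ⟨hPA, hres⟩ := (hf F hF).1
    have hM : {q ∈ Prod.map f f '' F | q.1 ∈ L}.Finite := (hPA L hL).1
    refine (hres _ hM).subset ?_
    intro p hp
    exact ⟨hp.1, ⟨p, hp.1, rfl⟩, hp.2⟩
  refine ⟨e, ?_, ?_, ?_⟩
  · -- e is a coarse map
    intro E hE
    have hEp := CX.proper E hE
    have himgP : ProperAx (Prod.map e e '' E) := by
      intro K hK
      constructor
      · have h2 : {p ∈ E | p.1 ∈ {x | e x ∈ K}}.Finite := (hEp _ (he K hK)).1
        refine (h2.image (Prod.map e e)).subset ?_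
        rintro q ⟨⟨p, hp, rfl⟩, hq⟩
        exact ⟨p, ⟨hp, hq⟩, rfl⟩
      · have h2 : {p ∈ E | p.2 ∈ {x | e x ∈ K}}.Finite := (hEp _ (he K hK)).2
        refine (h2.image (Prod.map e e)).subset ?_
        rintro q ⟨⟨p, hp, rfl⟩, hq⟩
        exact ⟨p, ⟨hp, hq⟩, rfl⟩
    have hW : rcomp (rtrans E₀) (rcomp E E₀) ∈ CX.ents :=
      CX.comp_mem _ (CX.trans_mem E₀ hE₀) _ (CX.comp_mem E hE E₀ hE₀)
    have hWsub : Prod.map f f '' (Prod.map e e '' E) ⊆ rcomp (rtrans E₀) (rcomp E E₀) := by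
      rintro q ⟨r, ⟨p, hp, rfl⟩, rfl⟩
      exact ⟨p.1, heE₀ p.1, p.2, hp, heE₀ p.2⟩
    constructor
    · refine ⟨himgP, ?_⟩
      intro K hK
      have h1 : {x : X | e x ∈ Prod.fst '' K}.Finite := he _ (hK.image _)
      refine ((hEp _ h1).1).subset ?_
      intro p hp
      exact ⟨hp.1, ⟨Prod.map e e p, hp.2, rfl⟩⟩
    · refine hmem' _ himgP ?_ ?_ ?_ (CX.subset_mem _ hW _ hWsub)
      · refine hunital_mono _ V ?_ hV
        rintro y ⟨q, ⟨p, hp, rfl⟩, rfl⟩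
        exact heV p.1
      · refine hunital_mono _ V ?_ hV
        rintro y ⟨q, ⟨p, hp, rfl⟩, rfl⟩
        exact heV p.2
      · refine ⟨properAx_mono hWsub (CX.proper _ hW), ?_⟩
        intro K hK
        have h1 : {x : X | f (e x) ∈ Prod.fst '' K}.Finite := hfe _ (hK.image _)
        have h2 : {p ∈ E | p.1 ∈ {x | f (e x) ∈ Prod.fst '' K}}.Finite := (hEp _ h1).1
        refine (h2.image (Prod.map e e)).subset ?_
        rintro q ⟨⟨p, hp, rfl⟩, hq⟩
        exact ⟨p, ⟨hp, ⟨Prod.map f f (Prod.map e e p), hq, rfl⟩⟩, rfl⟩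
  · -- f ∘ e is close to id
    intro E hE
    refine CX.subset_mem _ (CX.comp_mem _ (CX.trans_mem E₀ hE₀) E hE) _ ?_
    rintro q ⟨p, hp, rfl⟩
    exact ⟨p.1, heE₀ p.1, hp⟩
  · -- e ∘ f is close to id
    intro F hF
    obtain ⟨hFP, hFl, hFr, hFloc, hFimg⟩ := hmem F hF
    have hW' : rcomp (rtrans E₀) (Prod.map f f '' F) ∈ CX.ents :=
      CX.comp_mem _ (CX.trans_mem E₀ hE₀) _ hFimg
    have hWsub' : Prod.map f f '' (prodImage (e ∘ f) id F) ⊆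
        rcomp (rtrans E₀) (Prod.map f f '' F) := by
      rintro q ⟨r, ⟨p, hp, rfl⟩, rfl⟩
      exact ⟨f p.1, heE₀ (f p.1), ⟨p, hp, rfl⟩⟩
    have hHP : ProperAx (prodImage (e ∘ f) id F) := by
      intro K hK
      constructor
      · have h2 : {p ∈ F | f p.1 ∈ {x | e x ∈ K}}.Finite := hFfst F hF _ (he K hK)
        refine (h2.image (fun p => ((e ∘ f) p.1, id p.2))).subset ?_
        rintro q ⟨⟨p, hp, rfl⟩, hq⟩
        exact ⟨p, ⟨hp, hq⟩, rfl⟩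
      · have h2 : {p ∈ F | p.2 ∈ K}.Finite := (hFP K hK).2
        refine (h2.image (fun p => ((e ∘ f) p.1, id p.2))).subset ?_
        rintro q ⟨⟨p, hp, rfl⟩, hq⟩
        exact ⟨p, ⟨hp, hq⟩, rfl⟩
    refine hmem' _ hHP ?_ ?_ ?_ (CX.subset_mem _ hW' _ hWsub')
    · refine hunital_mono _ V ?_ hV
      rintro y ⟨q, ⟨p, hp, rfl⟩, rfl⟩
      exact heV (f p.1)
    · refine hunital_mono _ (rightSupp F) ?_ hFr
      rintro y ⟨q, ⟨p, hp, rfl⟩, rfl⟩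
      exact ⟨p, hp, rfl⟩
    · refine ⟨properAx_mono hWsub' (CX.proper _ hW'), ?_⟩
      intro K hK
      have hL1 : {x : X | f (e x) ∈ Prod.fst '' K}.Finite := hfe _ (hK.image _)
      have hL2 : (Prod.snd '' K).Finite := hK.image _
      have h2 : {p ∈ F | Prod.map f f p ∈ {x | f (e x) ∈ Prod.fst '' K} ×ˢ (Prod.snd '' K)}.Finite :=
        hFloc.2 _ (hL1.prod hL2)
      refine (h2.image (fun p => ((e ∘ f) p.1, id p.2))).subset ?_
      rintro q ⟨⟨p, hp, rfl⟩, hq⟩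
      refine ⟨p, ⟨hp, ⟨?_, ?_⟩⟩, rfl⟩
      · exact ⟨Prod.map f f ((e ∘ f) p.1, id p.2), hq, rfl⟩
      · exact ⟨Prod.map f f ((e ∘ f) p.1, id p.2), hq, rfl⟩
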